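/- Let Σ = {a,b} and E = (a|a)*. Then the Java-style pNFA Jp(E) has exponential backtracking, witnessed by the family {aⁿb : n ∈ ℕ}: the function n ↦ |btr_{Jp(E)}(aⁿb)| is in 2^{Ω(n)}, i.e., there exist c > 1 and N such that |btr_{Jp(E)}(aⁿb)| ≥ cⁿ for all n ≥ N. -/

import Mathlib

/-! ## Finite ordered trees -/

inductive OTree (α : Type) : Type where
  | node : α → List (OTree α) → OTree α

namespace OTree

/-- Number of nodes of a tree. -/
def size {α : Type} : OTree α → ℕ
  | node _ ts => 1 + (ts.attach.map (fun x => size x.1)).sum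
decreasing_by
  have := List.sizeOf_lt_of_mem x.2
  simp only [OTree.node.sizeOf_spec]
  omega

/-- Does some label in the tree satisfy `p`? -/
def anyLabel {α : Type} (p : α → Bool) : OTree α → Bool
  | node l ts => p l || ts.attach.any (fun x => anyLabel p x.1)
decreasing_by
  have := List.sizeOf_lt_of_mem x.2
  simp only [OTree.node.sizeOf_spec]
  omega

/-- Rank: maximum number of children of a node. -/
def rank {α : Type} : OTree α → ℕ
  | node _ ts => max ts.length ((ts.attach.map (fun x => rank x.1)).foldr max 0)
decreasing_by
  have := List.sizeOf_lt_of_mem x.2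
  simp only [OTree.node.sizeOf_spec]
  omega

/-- Root label. -/
def root {α : Type} : OTree α → α
  | node l _ => l

end OTree

/-! ## Prioritized NFA -/

/-- A prioritized NFA over alphabet `A` with state set `Q`.  `isQ2 q = true` means `q ∈ Q₂`
(the ε-states); `isQ2 q = false` means `q ∈ Q₁`.  `d1` is the (partial) deterministic
transition function on `Q₁`, `d2` the prioritized ε-transition function on `Q₂`
(the list order gives the priorities), `final` the set of final states. -/
structure PNFA (A Q : Type) where
  isQ2 : Q → Bool
  init : Q
  d1 : Q → A → Option Q
  d2 : Q → List Q
  final : Q → Bool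

/-- Labels of nodes of backtracking runs: states, `acc` and `rej`. -/
inductive BLab (Q : Type) : Type where
  | st : Q → BLab Q
  | acc : BLab Q
  | rej : BLab Q

/-- A backtracking run succeeds iff `acc` occurs in it. -/
def OTree.succeeds {Q : Type} (t : OTree (BLab Q)) : Bool :=
  t.anyLabel (fun l => match l with | BLab.acc => true | _ => false)

/-- Keep the children trees up to and including the first succeeding one
(all of them if none succeeds). -/
def firstSucc {Q : Type} : List (OTree (BLab Q)) → List (OTree (BLab Q))
  | [] => []
  | t :: ts => if t.succeeds then [t] else t :: firstSucc ts

/-- Termination measure for ε-recursions. -/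
def cMeasure {A Q : Type} [Fintype Q] (M : PNFA A Q) (C : Q → ℕ) : ℕ :=
  ∑ q : Q, ((M.d2 q).length - min (C q) (M.d2 q).length)

/-- The `(q,w,C)`-backtracking run of the pNFA `M`. -/
def btr {A Q : Type} [DecidableEq Q] [Fintype Q] (M : PNFA A Q) (q : Q) (w : List A)
    (C : Q → ℕ) : OTree (BLab Q) :=
  if M.final q = true ∧ w.isEmpty = true then .node (.st q) [.node .acc []]
  else if M.isQ2 q = true then
    if hik : (M.d2 q).length < C q + 1 then .node (.st q) [.node .rej []]
    else
      .node (.st q) (firstSucc ((List.range' (C q + 1) ((M.d2 q).length - C q)).attach.map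
        (fun x => btr M ((M.d2 q)[x.1 - 1]'(by
            have hx := x.2; rw [List.mem_range'_1] at hx; omega)) w
          (Function.update C q x.1))))
  else
    match w with
    | [] => .node (.st q) [.node .rej []]
    | a :: w' =>
      match M.d1 q a with
      | some q' => .node (.st q) [btr M q' w' (fun _ => 0)]
      | none => .node (.st q) [.node .rej []]
termination_by (w.length, cMeasure M C)
decreasing_by
  · apply Prod.Lex.right
    have hx := x.2; rw [List.mem_range'_1] at hx
    apply Finset.sum_lt_sum
    · intro p _
      by_cases hp : p = q
      · subst hp; simp only [Function.update_self]; omega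
      · simp only [Function.update_of_ne hp]; omega
    · exact ⟨q, Finset.mem_univ q, by simp only [Function.update_self]; omega⟩
  · apply Prod.Lex.left
    simp

/-- The backtracking run of `M` on `w`. -/
def btrW {A Q : Type} [DecidableEq Q] [Fintype Q] (M : PNFA A Q) (w : List A) :
    OTree (BLab Q) :=
  btr M M.init w (fun _ => 0)

/-! ## NFA with ε-transitions -/

/-- An NFA with ε-transitions (`none` plays the role of ε). -/
structure ENFA (A Q : Type) where
  init : Q
  tr : Q → Option A → Set Q
  F : Set Q

namespace ENFA

inductive Steps {A Q : Type} (N : ENFA A Q) : Q → List A → Q → Prop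
  | refl (q : Q) : Steps N q [] q
  | eps {p q r : Q} {w : List A} : q ∈ N.tr p none → Steps N q w r → Steps N p w r
  | sym {p q r : Q} {a : A} {w : List A} :
      q ∈ N.tr p (some a) → Steps N q w r → Steps N p (a :: w) r

/-- The language accepted by the ε-NFA. -/
def Lang {A Q : Type} (N : ENFA A Q) : Set (List A) :=
  {w | ∃ q, q ∈ N.F ∧ N.Steps N.init w q}

end ENFA

/-- The NFA `Ā` corresponding to a pNFA (forget priorities). -/
def PNFA.toENFA {A Q : Type} (M : PNFA A Q) : ENFA A Q where
  init := M.init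
  tr q o :=
    match o with
    | some a => if M.isQ2 q then ∅ else {q' | M.d1 q a = some q'}
    | none => if M.isQ2 q then {q' | q' ∈ M.d2 q} else ∅
  F := {q | M.final q = true}

/-! ## Growth conditions -/

/-- `f` grows exponentially, i.e. `f ∈ 2^{Ω(n)}`. -/
def ExpGrowth (f : ℕ → ℕ) : Prop :=
  ∃ c : ℝ, 1 < c ∧ ∃ N : ℕ, ∀ n ≥ N, c ^ n ≤ (f n : ℝ)

/-- `f(n) = max {|btr_M(w)| : |w| ≤ n}` (the alphabet being finite, the set below is a
nonempty bounded set of naturals, so `sSup` is its maximum). -/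
noncomputable def btrMax {A Q : Type} [Fintype A] [DecidableEq Q] [Fintype Q]
    (M : PNFA A Q) (n : ℕ) : ℕ :=
  sSup {m | ∃ w : List A, w.length ≤ n ∧ m = (btrW M w).size}

/-! ## Regular expressions (with greedy and lazy Kleene star) -/

inductive RE (A : Type) : Type where
  | zero : RE A
  | eps : RE A
  | ch : A → RE A
  | cat : RE A → RE A → RE A
  | alt : RE A → RE A → RE A
  | star : RE A → RE A
  | lazyStar : RE A → RE A

/-- The language denoted by a regular expression (the lazy star has the same
language as the greedy star). -/
def RE.lang {A : Type} : RE A → Language A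
  | .zero => 0
  | .eps => 1
  | .ch a => {[a]}
  | .cat e1 e2 => e1.lang * e2.lang
  | .alt e1 e2 => e1.lang + e2.lang
  | .star e => KStar.kstar e.lang
  | .lazyStar e => KStar.kstar e.lang

/-! ## The prioritized Thompson and Java constructions -/

/-- Raw automaton data over the state space ℕ (used to assemble the constructions;
states are allocated from a counter, so the pieces have disjoint state sets). -/
structure RawA (A : Type) where
  isQ2 : ℕ → Bool
  d1 : ℕ → A → Option ℕ
  d2 : ℕ → List ℕ

namespace RawA

/-- The raw automaton with no states/transitions. -/
def empty {A : Type} : RawA A where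
  isQ2 _ := false
  d1 _ _ := none
  d2 _ := []

/-- Disjoint union of two raw automata. -/
def merge {A : Type} (M1 M2 : RawA A) : RawA A where
  isQ2 q := M1.isQ2 q || M2.isQ2 q
  d1 q a := (M1.d1 q a).orElse (fun _ => M2.d1 q a)
  d2 q := M1.d2 q ++ M2.d2 q

/-- A single `Q₂`-state `q` with prioritized ε-transitions to `l`. -/
def epsNode {A : Type} (q : ℕ) (l : List ℕ) : RawA A where
  isQ2 p := p == q
  d1 _ _ := none
  d2 p := if p = q then l else []

/-- A single `Q₁`-state `q` reading `a` and moving to `f`. -/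
def chNode {A : Type} [DecidableEq A] (q f : ℕ) (a : A) : RawA A where
  isQ2 _ := false
  d1 p x := if p = q ∧ x = a then some f else none
  d2 _ := []

/-- Identify state `a` with state `b` (state `a` is replaced by `b` everywhere). -/
def rename {A : Type} (M : RawA A) (a b : ℕ) : RawA A where
  isQ2 q := if q = b then M.isQ2 a else if q = a then false else M.isQ2 q
  d1 q x := (if q = b then M.d1 a x else if q = a then none else M.d1 q x).map
      (fun r => if r = a then b else r)
  d2 q := (if q = b then M.d2 a else if q = a then [] else M.d2 q).map
      (fun r => if r = a then b else r)

end RawA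

/-- The prioritized Thompson construction.  `thpAux e n` builds, using fresh states
`n, n+1, …`, the quadruple (raw automaton, initial state, final state, next fresh state). -/
def thpAux {A : Type} [DecidableEq A] : RE A → ℕ → RawA A × ℕ × ℕ × ℕ
  | .zero, n => (RawA.empty, n, n + 1, n + 2)
  | .eps, n => (RawA.epsNode n [n + 1], n, n + 1, n + 2)
  | .ch a, n => (RawA.chNode n (n + 1) a, n, n + 1, n + 2)
  | .cat e1 e2, n =>
    let r1 := thpAux e1 n
    let r2 := thpAux e2 r1.2.2.2
    -- identify the final state of the first part with the initial state of the second
    (r1.1.merge (r2.1.rename r2.2.1 r1.2.2.1), r1.2.1, r2.2.2.1, r2.2.2.2)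
  | .alt e1 e2, n =>
    let r1 := thpAux e1 (n + 2)
    let r2 := thpAux e2 r1.2.2.2
    (((r1.1.merge r2.1).merge (RawA.epsNode n [r1.2.1, r2.2.1])).merge
        ((RawA.epsNode r1.2.2.1 [n + 1]).merge (RawA.epsNode r2.2.2.1 [n + 1])),
      n, n + 1, r2.2.2.2)
  | .star e1, n =>
    let r1 := thpAux e1 (n + 2)
    ((r1.1.merge (RawA.epsNode n [r1.2.1, n + 1])).merge
        (RawA.epsNode r1.2.2.1 [r1.2.1, n + 1]), n, n + 1, r1.2.2.2)
  | .lazyStar e1, n =>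
    let r1 := thpAux e1 (n + 2)
    ((r1.1.merge (RawA.epsNode n [n + 1, r1.2.1])).merge
        (RawA.epsNode r1.2.2.1 [n + 1, r1.2.1]), n, n + 1, r1.2.2.2)

/-- The Java construction.  `jpAux e n` builds, using fresh states `n, n+1, …`,
the quadruple (raw automaton, initial state, final state, next fresh state). -/
def jpAux {A : Type} [DecidableEq A] : RE A → ℕ → RawA A × ℕ × ℕ × ℕ
  | .zero, n => (RawA.empty, n, n + 1, n + 2)
  | .eps, n => (RawA.epsNode n [n + 1], n, n + 1, n + 2)
  | .ch a, n => (RawA.chNode n (n + 1) a, n, n + 1, n + 2)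
  | .cat e1 e2, n =>
    let r1 := jpAux e1 (n + 1)
    let r2 := jpAux e2 r1.2.2.2
    -- identify the initial state of the second part with the final state of the first,
    -- add a new initial state `n` with a single ε-transition to the first part
    ((r1.1.merge (r2.1.rename r2.2.1 r1.2.2.1)).merge (RawA.epsNode n [r1.2.1]),
      n, r2.2.2.1, r2.2.2.2)
  | .alt e1 e2, n =>
    let r1 := jpAux e1 (n + 1)
    let r2 := jpAux e2 r1.2.2.2
    -- identify the two final states; new initial state `n` with δ₂(n) = [q1, q2]
    ((r1.1.merge (r2.1.rename r2.2.2.1 r1.2.2.1)).merge (RawA.epsNode n [r1.2.1, r2.2.1]),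
      n, r1.2.2.1, r2.2.2.2)
  | .star e1, n =>
    let r1 := jpAux e1 (n + 1)
    -- new final state `n`; the initial state is the final state of the body,
    -- with δ₂ = [body-initial, new final]
    (r1.1.merge (RawA.epsNode r1.2.2.1 [r1.2.1, n]), r1.2.2.1, n, r1.2.2.2)
  | .lazyStar e1, n =>
    let r1 := jpAux e1 (n + 1)
    (r1.1.merge (RawA.epsNode r1.2.2.1 [n, r1.2.1]), r1.2.2.1, n, r1.2.2.2)

/-- Package a raw automaton as a pNFA on the finite state space `Fin (n+1)`. -/
def RawA.toPNFA {A : Type} (R : RawA A) (n q0 f0 : ℕ) : PNFA A (Fin (n + 1)) where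
  isQ2 q := R.isQ2 q.1
  init := if h : q0 < n + 1 then ⟨q0, h⟩ else ⟨0, Nat.succ_pos n⟩
  d1 q a := (R.d1 q.1 a).bind (fun m => if h : m < n + 1 then some ⟨m, h⟩ else none)
  d2 q := (R.d2 q.1).filterMap (fun m => if h : m < n + 1 then some ⟨m, h⟩ else none)
  final q := q.1 == f0

/-- The pNFA `Thp(E)` of the prioritized Thompson construction. -/
def thp {A : Type} [DecidableEq A] (e : RE A) : PNFA A (Fin ((thpAux e 0).2.2.2 + 1)) :=
  (thpAux e 0).1.toPNFA (thpAux e 0).2.2.2 (thpAux e 0).2.1 (thpAux e 0).2.2.1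

/-- The pNFA `Jp(E)` of the Java construction. -/
def jp {A : Type} [DecidableEq A] (e : RE A) : PNFA A (Fin ((jpAux e 0).2.2.2 + 1)) :=
  (jpAux e 0).1.toPNFA (jpAux e 0).2.2.2 (jpAux e 0).2.1 (jpAux e 0).2.2.1

/-- The two-letter alphabet Σ = {a, b}. -/
inductive AB : Type where
  | a : AB
  | b : AB
deriving DecidableEq

section Helpers
variable {α β γ : Type}

theorem any_map' (l : List α) (u : α → β) (p : β → Bool) :
    (l.map u).any p = l.any (fun x => p (u x)) := by
  induction l with
  | nil => rfl
  | cons h t ih => simp only [List.map_cons, List.any_cons, ih]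

theorem map_map' (l : List α) (u : α → β) (p : β → γ) :
    (l.map u).map p = l.map (fun x => p (u x)) := by
  induction l with
  | nil => rfl
  | cons h t ih => simp only [List.map_cons, ih]

theorem any_att (ts : List α) (f : α → Bool) :
    (ts.attach.any fun x => f x.1) = ts.any f := by
  induction ts with
  | nil => rfl
  | cons h t ih =>
    rw [List.attach_cons, List.any_cons, any_map', List.any_cons]
    exact congrArg (f h || ·) ih

theorem map_att (ts : List α) (f : α → β) :
    (ts.attach.map fun x => f x.1) = ts.map f := by
  induction ts with
  | nil => rfl
  | cons h t ih =>
    rw [List.attach_cons, List.map_cons, map_map', List.map_cons]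
    exact congrArg (f h :: ·) ih

end Helpers

section THelpers
variable {Q : Type}

lemma succeeds_st (q : Q) (ts : List (OTree (BLab Q))) :
    (OTree.node (BLab.st q) ts).succeeds = ts.any OTree.succeeds := by
  rw [OTree.succeeds, OTree.anyLabel, any_att]
  rfl

lemma succeeds_rej (ts : List (OTree (BLab Q))) (h : ts = []) :
    (OTree.node (BLab.rej (Q := Q)) ts).succeeds = false := by
  subst h
  rw [OTree.succeeds, OTree.anyLabel]
  rfl

lemma size_node (l : BLab Q) (ts : List (OTree (BLab Q))) :
    (OTree.node l ts).size = 1 + (ts.map OTree.size).sum := by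
  rw [OTree.size, map_att]

lemma firstSucc_pair (t1 t2 : OTree (BLab Q)) (h : t1.succeeds = false) :
    firstSucc [t1, t2] = [t1, t2] := by
  rw [firstSucc, h]
  simp only [Bool.false_eq_true, if_false, firstSucc]
  split <;> rfl

end THelpers

def E := RE.star (RE.alt (RE.ch AB.a) (RE.ch AB.a))
abbrev M : PNFA AB (Fin 7) := jp E

lemma step3 (x : AB) (t : List AB) (C : Fin 7 → ℕ) (h : C 3 = 0) :
    btr M 3 (x :: t) C =
      .node (.st 3) (firstSucc [btr M 1 (x :: t) (Function.update C 3 1),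
        btr M 0 (x :: t) (Function.update C 3 2)]) := by
  rw [btr]
  simp [h, List.range', List.attach, List.attachWith,
    show M.isQ2 3 = true from rfl, show M.d2 3 = [1,0] from rfl,
    show M.final 3 = false from rfl]

lemma step1 (x : AB) (t : List AB) (C : Fin 7 → ℕ) (h : C 1 = 0) :
    btr M 1 (x :: t) C =
      .node (.st 1) (firstSucc [btr M 2 (x :: t) (Function.update C 1 1),
        btr M 4 (x :: t) (Function.update C 1 2)]) := by
  rw [btr]
  simp [h, List.range', List.attach, List.attachWith,
    show M.isQ2 1 = true from rfl, show M.d2 1 = [2,4] from rfl,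
    show M.final 1 = false from rfl]

lemma step0 (x : AB) (t : List AB) (C : Fin 7 → ℕ) :
    btr M 0 (x :: t) C = .node (.st 0) [.node .rej []] := by
  rw [btr]
  simp [show M.isQ2 0 = false from rfl,
    show ∀ y, M.d1 0 y = none from by intro y; cases y <;> rfl]

lemma step2a (t : List AB) (C : Fin 7 → ℕ) :
    btr M 2 (AB.a :: t) C = .node (.st 2) [btr M 3 t (fun _ => 0)] := by
  rw [btr]
  simp [show M.isQ2 2 = false from rfl, show M.final 2 = false from rfl,
    show M.d1 2 AB.a = some 3 from rfl]

lemma step2b (t : List AB) (C : Fin 7 → ℕ) :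
    btr M 2 (AB.b :: t) C = .node (.st 2) [.node .rej []] := by
  rw [btr]
  simp [show M.isQ2 2 = false from rfl, show M.final 2 = false from rfl,
    show M.d1 2 AB.b = none from rfl]

lemma step4a (t : List AB) (C : Fin 7 → ℕ) :
    btr M 4 (AB.a :: t) C = .node (.st 4) [btr M 3 t (fun _ => 0)] := by
  rw [btr]
  simp [show M.isQ2 4 = false from rfl, show M.final 4 = false from rfl,
    show M.d1 4 AB.a = some 3 from rfl]

lemma step4b (t : List AB) (C : Fin 7 → ℕ) :
    btr M 4 (AB.b :: t) C = .node (.st 4) [.node .rej []] := by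
  rw [btr]
  simp [show M.isQ2 4 = false from rfl, show M.final 4 = false from rfl,
    show M.d1 4 AB.b = none from rfl]

/-- The key tree: backtracking run from the initial state 3 on `aⁿb`. -/
def Tn (n : ℕ) : OTree (BLab (Fin 7)) :=
  btr M 3 (List.replicate n AB.a ++ [AB.b]) (fun _ => 0)

lemma Tn_succ (n : ℕ) (h : (Tn n).succeeds = false) :
    Tn (n + 1) =
      .node (.st 3) [.node (.st 1) [.node (.st 2) [Tn n], .node (.st 4) [Tn n]],
        .node (.st 0) [.node .rej []]] := by
  have hw : List.replicate (n + 1) AB.a ++ [AB.b] =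
      AB.a :: (List.replicate n AB.a ++ [AB.b]) := by
    rw [List.replicate_succ, List.cons_append]
  rw [Tn] at h
  rw [Tn, hw, step3 _ _ _ rfl, step1 _ _ _ (by simp [Function.update]),
    step0, step2a, step4a]
  have h2 : (OTree.node (BLab.st (2 : Fin 7))
      [btr M 3 (List.replicate n AB.a ++ [AB.b]) fun _ => 0]).succeeds = false := by
    rw [succeeds_st]; simp [h]
  rw [firstSucc_pair _ _ h2]
  have h1 : (OTree.node (BLab.st (1 : Fin 7))
      [OTree.node (BLab.st 2) [btr M 3 (List.replicate n AB.a ++ [AB.b]) fun _ => 0],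
       OTree.node (BLab.st 4) [btr M 3 (List.replicate n AB.a ++ [AB.b]) fun _ => 0]]).succeeds
      = false := by
    rw [succeeds_st]
    simp [succeeds_st, h]
  rw [firstSucc_pair _ _ h1, Tn]

lemma Tn_zero :
    Tn 0 = .node (.st 3) [.node (.st 1) [.node (.st 2) [.node .rej []],
      .node (.st 4) [.node .rej []]], .node (.st 0) [.node .rej []]] := by
  have h2 : (OTree.node (BLab.st (2 : Fin 7)) [OTree.node BLab.rej []]).succeeds = false := by
    rw [succeeds_st]; simp [succeeds_rej]
  have h1 : (OTree.node (BLab.st (1 : Fin 7)) [OTree.node (BLab.st 2) [OTree.node BLab.rej []],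
      OTree.node (BLab.st 4) [OTree.node BLab.rej []]]).succeeds = false := by
    rw [succeeds_st]
    simp [succeeds_st, succeeds_rej]
  rw [Tn, List.replicate, List.nil_append, step3 _ _ _ rfl,
    step1 _ _ _ (by simp [Function.update]), step0, step2b, step4b,
    firstSucc_pair _ _ h2, firstSucc_pair _ _ h1]

lemma Tn_main (n : ℕ) : (Tn n).succeeds = false ∧ 2 ^ n ≤ (Tn n).size := by
  induction n with
  | zero =>
    rw [Tn_zero]
    constructor
    · rw [succeeds_st]
      simp [succeeds_st, succeeds_rej]
    · rw [size_node]; omega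
  | succ n ih =>
    rw [Tn_succ n ih.1]
    constructor
    · rw [succeeds_st]
      simp [succeeds_st, succeeds_rej, ih.1]
    · simp only [size_node, List.map_cons, List.map_nil, List.sum_cons, List.sum_nil]
      have := ih.2
      have : 2 ^ (n + 1) = 2 * 2 ^ n := by ring
      omega

/-- For `E = (a|a)*`, the pNFA `Jp(E)` has exponential backtracking,
witnessed by the family `{aⁿb : n ∈ ℕ}`: the function
`n ↦ |btr_{Jp(E)}(aⁿb)|` is in `2^{Ω(n)}`. -/
theorem statement7 :
    ExpGrowth (fun n =>
      (btrW (jp (RE.star (RE.alt (RE.ch AB.a) (RE.ch AB.a))))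
        (List.replicate n AB.a ++ [AB.b])).size) := by
  refine ⟨2, one_lt_two, 0, fun n _ => ?_⟩
  have h : 2 ^ n ≤ (Tn n).size := (Tn_main n).2
  have he : btrW (jp (RE.star (RE.alt (RE.ch AB.a) (RE.ch AB.a))))
      (List.replicate n AB.a ++ [AB.b]) = Tn n := rfl
  rw [← he] at h
  show (2:ℝ)^n ≤ ((btrW (jp (RE.star (RE.alt (RE.ch AB.a) (RE.ch AB.a))))
      (List.replicate n AB.a ++ [AB.b])).size : ℝ)
  calc (2 : ℝ) ^ n = ((2 ^ n : ℕ) : ℝ) := by push_cast; ring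
    _ ≤ _ := by exact_mod_cast h
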